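/- Let w₁₂, w₃₄ : (0,∞) → (0,∞) be decreasing functions with w₁₂(r)·w₃₄(r) = r^{-2} for all r > 0. Then there is an absolute constant C > 0 such that for all measurable ψ₁, ψ₂, ψ₃, ψ₄ : (0,∞) → ℂ, |M_{4,1}(ψ₁,ψ₂,ψ₃,ψ₄)| ≤ C ‖w₁₂·ψ₁ψ₂‖_{L¹} ‖w₃₄·ψ₃ψ₄‖_{L¹} whenever the right-hand side is finite. -/

import Mathlib

open MeasureTheory Set
open scoped ENNReal

/-- The measure `2π r dr` on `(0,∞)`. -/
noncomputable def rmeas : Measure ℝ :=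
  (volume.restrict (Set.Ioi (0:ℝ))).withDensity (fun r => ENNReal.ofReal (2 * Real.pi * r))

/-- `Re(conj ψ₁ ψ₂)(r)`. -/
noncomputable def Re2 (ψ₁ ψ₂ : ℝ → ℂ) (r : ℝ) : ℝ := ((starRingEnd ℂ) (ψ₁ r) * ψ₂ r).re

/-- `A_θ[ψ₁,ψ₂](r) = -(1/2)∫₀^r Re(conj ψ₁ ψ₂)(r') r' dr'`. -/
noncomputable def Atheta2 (ψ₁ ψ₂ : ℝ → ℂ) (r : ℝ) : ℝ :=
  -(1/2) * ∫ t in (0:ℝ)..r, Re2 ψ₁ ψ₂ t * t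

/-- `M_{4,1}(ψ₁,ψ₂,ψ₃,ψ₄) = 2π∫₀^∞ r^{-2} A_θ[ψ₁,ψ₂](r) Re(conj ψ₃ ψ₄)(r) r dr`. -/
noncomputable def M41 (ψ₁ ψ₂ ψ₃ ψ₄ : ℝ → ℂ) : ℝ :=
  2 * Real.pi * ∫ r in Set.Ioi (0:ℝ), (r ^ 2)⁻¹ * Atheta2 ψ₁ ψ₂ r * Re2 ψ₃ ψ₄ r * r

lemma ofReal_norm_eq_coe_nnnorm {E : Type*} [SeminormedAddCommGroup E] (a : E) :
    ENNReal.ofReal ‖a‖ = (‖a‖₊ : ℝ≥0∞) := by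
  rw [ofReal_norm]; rfl

lemma eLpNorm_one_eq_lintegral_nnnorm {α E : Type*} [MeasurableSpace α] {μ : Measure α}
    [NormedAddCommGroup E] {f : α → E} : eLpNorm f 1 μ = ∫⁻ x, (‖f x‖₊ : ℝ≥0∞) ∂μ :=
  eLpNorm_one_eq_lintegral_enorm

lemma ennnorm_integral_le_lintegral_ennnorm {α E : Type*} [MeasurableSpace α] {μ : Measure α}
    [NormedAddCommGroup E] [NormedSpace ℝ E] (f : α → E) :
    (‖∫ a, f a ∂μ‖₊ : ℝ≥0∞) ≤ ∫⁻ a, (‖f a‖₊ : ℝ≥0∞) ∂μ :=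
  enorm_integral_le_lintegral_enorm f

lemma abs_Re2_le (ψ₁ ψ₂ : ℝ → ℂ) (r : ℝ) : |Re2 ψ₁ ψ₂ r| ≤ ‖ψ₁ r * ψ₂ r‖ := by
  have h1 : |Re2 ψ₁ ψ₂ r| ≤ ‖(starRingEnd ℂ) (ψ₁ r) * ψ₂ r‖ := Complex.abs_re_le_norm _
  simpa [norm_mul] using h1

lemma lintegral_rmeas (f : ℝ → ℝ≥0∞) :
    ∫⁻ r, f r ∂rmeas = ∫⁻ r in Set.Ioi (0:ℝ), ENNReal.ofReal (2 * Real.pi * r) * f r := by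
  rw [rmeas, lintegral_withDensity_eq_lintegral_mul_non_measurable]
  · rfl
  · exact ENNReal.measurable_ofReal.comp (measurable_const.mul measurable_id)
  · exact Filter.Eventually.of_forall fun r => ENNReal.ofReal_lt_top

lemma eLpNorm_weighted (w : ℝ → ℝ) (hw : ∀ r : ℝ, 0 < r → 0 ≤ w r) (φ : ℝ → ℂ) :
    eLpNorm (fun r => ((w r : ℝ) : ℂ) * φ r) 1 rmeas
      = ENNReal.ofReal (2 * Real.pi) * ∫⁻ r in Set.Ioi (0:ℝ),
          ENNReal.ofReal (w r) * ((‖φ r‖₊ : ℝ≥0∞) * ENNReal.ofReal r) := by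
  rw [eLpNorm_one_eq_lintegral_nnnorm, lintegral_rmeas, ← lintegral_const_mul' _ _ ENNReal.ofReal_ne_top]
  refine setLIntegral_congr_fun measurableSet_Ioi (fun r hr => ?_)
  have hr0 : (0:ℝ) < r := hr
  have hn : ((‖((w r : ℝ) : ℂ) * φ r‖₊ : ℝ≥0∞)) = ENNReal.ofReal (w r * ‖φ r‖) := by
    rw [← ofReal_norm_eq_coe_nnnorm, norm_mul, Complex.norm_real, Real.norm_eq_abs,
      abs_of_nonneg (hw r hr0)]
  have hφ : ((‖φ r‖₊ : ℝ≥0∞)) = ENNReal.ofReal ‖φ r‖ := (ofReal_norm_eq_coe_nnnorm _).symm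
  rw [hn, hφ, ← ENNReal.ofReal_mul (norm_nonneg _), ← ENNReal.ofReal_mul (hw r hr0),
    ← ENNReal.ofReal_mul (by positivity : (0:ℝ) ≤ 2 * Real.pi),
    ← ENNReal.ofReal_mul (mul_nonneg (by positivity : (0:ℝ) ≤ 2 * Real.pi) hr0.le)]
  congr 1; ring

lemma wA_bound (w : ℝ → ℝ) (hw0 : ∀ r : ℝ, 0 < r → 0 < w r)
    (hwa : ∀ r s : ℝ, 0 < r → r ≤ s → w s ≤ w r) (ψ₁ ψ₂ : ℝ → ℂ) {r : ℝ} (hr : 0 < r) :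
    ENNReal.ofReal (w r) * ENNReal.ofReal |Atheta2 ψ₁ ψ₂ r| ≤
      ENNReal.ofReal (1/2) * ∫⁻ t in Set.Ioi (0:ℝ),
        ENNReal.ofReal (w t) * ((‖ψ₁ t * ψ₂ t‖₊ : ℝ≥0∞) * ENNReal.ofReal t) := by
  have hA : |Atheta2 ψ₁ ψ₂ r| = (1/2) * |∫ t in Set.Ioc (0:ℝ) r, Re2 ψ₁ ψ₂ t * t| := by
    rw [Atheta2, intervalIntegral.integral_of_le hr.le, abs_mul]
    norm_num
  rw [hA, ENNReal.ofReal_mul (by norm_num)]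
  rw [show ENNReal.ofReal (w r) * (ENNReal.ofReal (1/2) * ENNReal.ofReal |∫ t in Set.Ioc (0:ℝ) r, Re2 ψ₁ ψ₂ t * t|)
      = ENNReal.ofReal (1/2) * (ENNReal.ofReal (w r) * ENNReal.ofReal |∫ t in Set.Ioc (0:ℝ) r, Re2 ψ₁ ψ₂ t * t|) by ring]
  refine mul_le_mul_right ?_ _
  have h1 : ENNReal.ofReal |∫ t in Set.Ioc (0:ℝ) r, Re2 ψ₁ ψ₂ t * t|
      ≤ ∫⁻ t in Set.Ioc (0:ℝ) r, (‖Re2 ψ₁ ψ₂ t * t‖₊ : ℝ≥0∞) := by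
    rw [← Real.norm_eq_abs, ofReal_norm_eq_coe_nnnorm]
    exact ennnorm_integral_le_lintegral_ennnorm _
  calc ENNReal.ofReal (w r) * ENNReal.ofReal |∫ t in Set.Ioc (0:ℝ) r, Re2 ψ₁ ψ₂ t * t|
      ≤ ENNReal.ofReal (w r) * ∫⁻ t in Set.Ioc (0:ℝ) r, (‖Re2 ψ₁ ψ₂ t * t‖₊ : ℝ≥0∞) :=
        mul_le_mul_right h1 _
    _ = ∫⁻ t in Set.Ioc (0:ℝ) r, ENNReal.ofReal (w r) * (‖Re2 ψ₁ ψ₂ t * t‖₊ : ℝ≥0∞) :=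
        (lintegral_const_mul' _ _ ENNReal.ofReal_ne_top).symm
    _ ≤ ∫⁻ t in Set.Ioc (0:ℝ) r, ENNReal.ofReal (w t) * ((‖ψ₁ t * ψ₂ t‖₊ : ℝ≥0∞) * ENNReal.ofReal t) := by
        refine lintegral_mono_ae ((ae_restrict_iff' measurableSet_Ioc).2
          (Filter.Eventually.of_forall fun t ht => ?_))
        have ht0 : (0:ℝ) < t := ht.1
        have hwle : w r ≤ w t := hwa t r ht0 ht.2
        have hnorm : (‖Re2 ψ₁ ψ₂ t * t‖₊ : ℝ≥0∞) ≤ (‖ψ₁ t * ψ₂ t‖₊ : ℝ≥0∞) * ENNReal.ofReal t := by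
          rw [← ofReal_norm_eq_coe_nnnorm, ← ofReal_norm_eq_coe_nnnorm, ← ENNReal.ofReal_mul (norm_nonneg _)]
          refine ENNReal.ofReal_le_ofReal ?_
          rw [Real.norm_eq_abs, abs_mul, abs_of_pos ht0]
          exact mul_le_mul_of_nonneg_right (abs_Re2_le ψ₁ ψ₂ t) ht0.le
        exact mul_le_mul' (ENNReal.ofReal_le_ofReal hwle) hnorm
    _ ≤ ∫⁻ t in Set.Ioi (0:ℝ), ENNReal.ofReal (w t) * ((‖ψ₁ t * ψ₂ t‖₊ : ℝ≥0∞) * ENNReal.ofReal t) :=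
        lintegral_mono_set Set.Ioc_subset_Ioi_self


lemma ae_Re2_zero (w : ℝ → ℝ) (hw0 : ∀ r : ℝ, 0 < r → 0 < w r)
    (hwa : ∀ r s : ℝ, 0 < r → r ≤ s → w s ≤ w r) (ψ₁ ψ₂ : ℝ → ℂ)
    (hm₁ : Measurable ψ₁) (hm₂ : Measurable ψ₂)
    (h0 : ∫⁻ t in Set.Ioi (0:ℝ),
        ENNReal.ofReal (w t) * ((‖ψ₁ t * ψ₂ t‖₊ : ℝ≥0∞) * ENNReal.ofReal t) = 0) :
    ∀ᵐ t ∂(volume.restrict (Set.Ioi (0:ℝ))), Re2 ψ₁ ψ₂ t = 0 := by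
  have haem : AEMeasurable
      (fun t : ℝ => ENNReal.ofReal (w t) * ((‖ψ₁ t * ψ₂ t‖₊ : ℝ≥0∞) * ENNReal.ofReal t))
      (volume.restrict (Set.Ioi (0:ℝ))) := by
    refine (ENNReal.measurable_ofReal.comp_aemeasurable
      (aemeasurable_restrict_of_antitoneOn measurableSet_Ioi
        (fun a ha b _ hab => hwa a b ha hab))).mul ?_
    exact ((((hm₁.mul hm₂).nnnorm).coe_nnreal_ennreal).mul
      (ENNReal.measurable_ofReal.comp measurable_id)).aemeasurable
  have hz := (lintegral_eq_zero_iff' haem).mp h0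
  filter_upwards [hz, ae_restrict_mem measurableSet_Ioi] with t h0t ht
  have ht0 : (0:ℝ) < t := ht
  have hwne : ENNReal.ofReal (w t) ≠ 0 := by
    simp [ENNReal.ofReal_eq_zero, not_le, hw0 t ht0]
  have htne : ENNReal.ofReal t ≠ 0 := by
    simp [ENNReal.ofReal_eq_zero, not_le, ht0]
  have hn0 : (‖ψ₁ t * ψ₂ t‖₊ : ℝ≥0∞) = 0 := by
    rcases mul_eq_zero.mp h0t with h | h
    · exact absurd h hwne
    · rcases mul_eq_zero.mp h with h | h
      · exact h
      · exact absurd h htne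
  have hprod0 : ψ₁ t * ψ₂ t = 0 := by simpa using hn0
  rcases mul_eq_zero.mp hprod0 with h | h <;> simp [Re2, h]

/-- Duality estimate (weighted `L¹`-type) for `M_{4,1}`. -/
theorem duality_estimate_M41_weighted :
    ∃ C : ℝ, 0 < C ∧
      ∀ w₁₂ w₃₄ : ℝ → ℝ,
        (∀ r : ℝ, 0 < r → 0 < w₁₂ r) → (∀ r : ℝ, 0 < r → 0 < w₃₄ r) →
        (∀ r s : ℝ, 0 < r → r ≤ s → w₁₂ s ≤ w₁₂ r) →
        (∀ r s : ℝ, 0 < r → r ≤ s → w₃₄ s ≤ w₃₄ r) →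
        (∀ r : ℝ, 0 < r → w₁₂ r * w₃₄ r = (r ^ 2)⁻¹) →
        ∀ ψ₁ ψ₂ ψ₃ ψ₄ : ℝ → ℂ,
          Measurable ψ₁ → Measurable ψ₂ → Measurable ψ₃ → Measurable ψ₄ →
          ENNReal.ofReal |M41 ψ₁ ψ₂ ψ₃ ψ₄| ≤
            ENNReal.ofReal C
              * eLpNorm (fun r => ((w₁₂ r : ℝ) : ℂ) * (ψ₁ r * ψ₂ r)) 1 rmeas
              * eLpNorm (fun r => ((w₃₄ r : ℝ) : ℂ) * (ψ₃ r * ψ₄ r)) 1 rmeas := by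
  refine ⟨1, one_pos, ?_⟩
  intro w₁₂ w₃₄ h12pos h34pos h12anti h34anti hprod ψ₁ ψ₂ ψ₃ ψ₄ hm₁ hm₂ hm₃ hm₄
  set K := ∫⁻ t in Set.Ioi (0:ℝ),
      ENNReal.ofReal (w₁₂ t) * ((‖ψ₁ t * ψ₂ t‖₊ : ℝ≥0∞) * ENNReal.ofReal t) with hKdef
  set L := ∫⁻ t in Set.Ioi (0:ℝ),
      ENNReal.ofReal (w₃₄ t) * ((‖ψ₃ t * ψ₄ t‖₊ : ℝ≥0∞) * ENNReal.ofReal t) with hLdef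
  have hE12 : eLpNorm (fun r => ((w₁₂ r : ℝ) : ℂ) * (ψ₁ r * ψ₂ r)) 1 rmeas
      = ENNReal.ofReal (2 * Real.pi) * K :=
    eLpNorm_weighted w₁₂ (fun r hr => (h12pos r hr).le) _
  have hE34 : eLpNorm (fun r => ((w₃₄ r : ℝ) : ℂ) * (ψ₃ r * ψ₄ r)) 1 rmeas
      = ENNReal.ofReal (2 * Real.pi) * L :=
    eLpNorm_weighted w₃₄ (fun r hr => (h34pos r hr).le) _
  have h2pi_ne : ENNReal.ofReal (2 * Real.pi) ≠ 0 := by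
    simp [ENNReal.ofReal_eq_zero, not_le, Real.pi_pos]
  -- a helper to conclude when the integrand of M41 vanishes a.e.
  have hMzero : ∀ (_ : ∀ᵐ r ∂(volume.restrict (Set.Ioi (0:ℝ))),
      (r ^ 2)⁻¹ * Atheta2 ψ₁ ψ₂ r * Re2 ψ₃ ψ₄ r * r = 0),
      ENNReal.ofReal |M41 ψ₁ ψ₂ ψ₃ ψ₄| ≤
        ENNReal.ofReal 1
          * eLpNorm (fun r => ((w₁₂ r : ℝ) : ℂ) * (ψ₁ r * ψ₂ r)) 1 rmeas
          * eLpNorm (fun r => ((w₃₄ r : ℝ) : ℂ) * (ψ₃ r * ψ₄ r)) 1 rmeas := by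
    intro hG
    have hM : M41 ψ₁ ψ₂ ψ₃ ψ₄ = 0 := by
      rw [M41, integral_eq_zero_of_ae (by filter_upwards [hG] with r h using h), mul_zero]
    simp [hM]
  by_cases hK0 : K = 0
  · -- left norm vanishes
    have hψ := ae_Re2_zero w₁₂ h12pos h12anti ψ₁ ψ₂ hm₁ hm₂ hK0
    have hA0 : ∀ r : ℝ, 0 < r → Atheta2 ψ₁ ψ₂ r = 0 := by
      intro r hr
      have hz2 : ∀ᵐ t ∂(volume.restrict (Set.Ioc (0:ℝ) r)), Re2 ψ₁ ψ₂ t = 0 :=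
        ae_restrict_of_ae_restrict_of_subset Set.Ioc_subset_Ioi_self hψ
      rw [Atheta2, intervalIntegral.integral_of_le hr.le,
        integral_eq_zero_of_ae (by filter_upwards [hz2] with t h; simp [h]), mul_zero]
    refine hMzero ?_
    filter_upwards [ae_restrict_mem measurableSet_Ioi] with r hr
    rw [hA0 r hr]; ring
  by_cases hL0 : L = 0
  · have hψ := ae_Re2_zero w₃₄ h34pos h34anti ψ₃ ψ₄ hm₃ hm₄ hL0
    refine hMzero ?_
    filter_upwards [hψ] with r h
    rw [h]; ring
  by_cases hKtop : K = ⊤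
  · -- right-hand side is infinite
    have : ENNReal.ofReal 1
        * eLpNorm (fun r => ((w₁₂ r : ℝ) : ℂ) * (ψ₁ r * ψ₂ r)) 1 rmeas
        * eLpNorm (fun r => ((w₃₄ r : ℝ) : ℂ) * (ψ₃ r * ψ₄ r)) 1 rmeas = ⊤ := by
      rw [hE12, hE34, hKtop, ENNReal.ofReal_one, one_mul, ENNReal.mul_top h2pi_ne,
        ENNReal.top_mul (mul_ne_zero h2pi_ne hL0)]
    rw [this]; exact le_top
  -- main case
  have h1 : ENNReal.ofReal |M41 ψ₁ ψ₂ ψ₃ ψ₄| ≤ ENNReal.ofReal (2 * Real.pi) *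
      ∫⁻ r in Set.Ioi (0:ℝ),
        (‖(r ^ 2)⁻¹ * Atheta2 ψ₁ ψ₂ r * Re2 ψ₃ ψ₄ r * r‖₊ : ℝ≥0∞) := by
    rw [M41, abs_mul, abs_of_nonneg (by positivity : (0:ℝ) ≤ 2 * Real.pi),
      ENNReal.ofReal_mul (by positivity)]
    refine mul_le_mul_right ?_ _
    rw [← Real.norm_eq_abs, ofReal_norm_eq_coe_nnnorm]
    exact ennnorm_integral_le_lintegral_ennnorm _
  have h2 : ∀ r ∈ Set.Ioi (0:ℝ),
      (‖(r ^ 2)⁻¹ * Atheta2 ψ₁ ψ₂ r * Re2 ψ₃ ψ₄ r * r‖₊ : ℝ≥0∞) ≤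
        (ENNReal.ofReal (1/2) * K) *
          (ENNReal.ofReal (w₃₄ r) * ((‖ψ₃ r * ψ₄ r‖₊ : ℝ≥0∞) * ENNReal.ofReal r)) := by
    intro r hr
    have hr0 : (0:ℝ) < r := hr
    have habs : |(r ^ 2)⁻¹ * Atheta2 ψ₁ ψ₂ r * Re2 ψ₃ ψ₄ r * r|
        = (w₁₂ r * |Atheta2 ψ₁ ψ₂ r|) * (w₃₄ r * (|Re2 ψ₃ ψ₄ r| * r)) := by
      rw [abs_mul, abs_mul, abs_mul, abs_of_pos hr0,
        abs_of_nonneg (by positivity : (0:ℝ) ≤ (r ^ 2)⁻¹), ← hprod r hr0]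
      ring
    rw [← ofReal_norm_eq_coe_nnnorm, Real.norm_eq_abs, habs,
      ENNReal.ofReal_mul (mul_nonneg (h12pos r hr0).le (abs_nonneg _)), ENNReal.ofReal_mul (h12pos r hr0).le,
      ENNReal.ofReal_mul (h34pos r hr0).le, ENNReal.ofReal_mul (abs_nonneg _)]
    refine mul_le_mul' ?_ (mul_le_mul_right (mul_le_mul_left ?_ _) _)
    · exact wA_bound w₁₂ h12pos h12anti ψ₁ ψ₂ hr0
    · rw [← ofReal_norm_eq_coe_nnnorm]
      exact ENNReal.ofReal_le_ofReal (abs_Re2_le ψ₃ ψ₄ r)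
  have h3 : (∫⁻ r in Set.Ioi (0:ℝ),
      (‖(r ^ 2)⁻¹ * Atheta2 ψ₁ ψ₂ r * Re2 ψ₃ ψ₄ r * r‖₊ : ℝ≥0∞)) ≤
      (ENNReal.ofReal (1/2) * K) * L := by
    calc (∫⁻ r in Set.Ioi (0:ℝ),
        (‖(r ^ 2)⁻¹ * Atheta2 ψ₁ ψ₂ r * Re2 ψ₃ ψ₄ r * r‖₊ : ℝ≥0∞))
        ≤ ∫⁻ r in Set.Ioi (0:ℝ), (ENNReal.ofReal (1/2) * K) *
            (ENNReal.ofReal (w₃₄ r) * ((‖ψ₃ r * ψ₄ r‖₊ : ℝ≥0∞) * ENNReal.ofReal r)) :=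
          lintegral_mono_ae ((ae_restrict_iff' measurableSet_Ioi).2
            (Filter.Eventually.of_forall h2))
      _ = (ENNReal.ofReal (1/2) * K) * L :=
          lintegral_const_mul' _ _ (ENNReal.mul_ne_top ENNReal.ofReal_ne_top hKtop)
  have hc : ENNReal.ofReal (1/2) ≤ ENNReal.ofReal (2 * Real.pi) :=
    ENNReal.ofReal_le_ofReal (by nlinarith [Real.pi_gt_three])
  calc ENNReal.ofReal |M41 ψ₁ ψ₂ ψ₃ ψ₄|
      ≤ ENNReal.ofReal (2 * Real.pi) * ((ENNReal.ofReal (1/2) * K) * L) :=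
        h1.trans (mul_le_mul_right h3 _)
    _ = ENNReal.ofReal (1/2) * (ENNReal.ofReal (2 * Real.pi) * K * L) := by ring
    _ ≤ ENNReal.ofReal (2 * Real.pi) * (ENNReal.ofReal (2 * Real.pi) * K * L) :=
        mul_le_mul_left hc _
    _ = ENNReal.ofReal 1 * (ENNReal.ofReal (2 * Real.pi) * K)
          * (ENNReal.ofReal (2 * Real.pi) * L) := by
        rw [ENNReal.ofReal_one, one_mul]; ring
    _ = ENNReal.ofReal 1
          * eLpNorm (fun r => ((w₁₂ r : ℝ) : ℂ) * (ψ₁ r * ψ₂ r)) 1 rmeas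
          * eLpNorm (fun r => ((w₃₄ r : ℝ) : ℂ) * (ψ₃ r * ψ₄ r)) 1 rmeas := by
        rw [hE12, hE34]
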